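/- The team-semantical version of multiteam inclusion is characterized by covers by balanced subsets: let X : Finset α and f, g : α → β. There exists a multiplicity function m : α → ℕ with m s > 0 for all s ∈ X such that the multiteam W (obtained by taking each s ∈ X with multiplicity m s) satisfies Multiset.map f W ≤ Multiset.map g W, if and only if there exists a finite list L of finsets Y ⊆ X such that every element of X belongs to some Y in L and every Y in L satisfies Multiset.map f Y.val ≤ Multiset.map g Y.val. -/

import Mathlib

namespace TsvAux

open List

variable {α β : Type*}

/-- The step relation of the exchange graph. -/
def Step (X : Finset α) (f g : α → β) (t u : α) : Prop :=
  t ∈ X ∧ u ∈ X ∧ f t = g u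

theorem exists_dup_decomp {l : List α} (h : ¬ l.Nodup) :
    ∃ (x : α) (l1 l2 l3 : List α), l = l1 ++ x :: l2 ++ x :: l3 := by
  induction l with
  | nil => simp at h
  | cons a l ih =>
    by_cases ha : a ∈ l
    · obtain ⟨s, t, rfl⟩ := List.append_of_mem ha
      exact ⟨a, [], s, t, by simp⟩
    · have hnl : ¬ l.Nodup := by
        intro hn
        exact h (List.nodup_cons.2 ⟨ha, hn⟩)
      obtain ⟨x, l1, l2, l3, rfl⟩ := ih hnl
      exact ⟨x, a :: l1, l2, l3, by simp⟩

theorem chain_split' {R : α → α → Prop} {a c : α} {l₁ l₂ : List α} :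
    List.Chain R a (l₁ ++ c :: l₂) ↔ List.Chain R a (l₁ ++ [c]) ∧ List.Chain R c l₂ :=
  List.isChain_cons_split

theorem chain_singleton' {R : α → α → Prop} {a b : α} : List.Chain R a [b] ↔ R a b :=
  List.isChain_pair

theorem chain_append_singleton_iff_forall₂' {R : α → α → Prop} {a b : α} {l : List α} :
    List.Chain R a (l ++ [b]) ↔ List.Forall₂ R (a :: l) (l ++ [b]) :=
  List.isChain_cons_append_singleton_iff_forall₂

theorem map_eq_of_forall₂ {f g : α → β} :
    ∀ {l1 l2 : List α}, List.Forall₂ (fun t u => f t = g u) l1 l2 →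
      l1.map f = l2.map g
  | _, _, List.Forall₂.nil => rfl
  | _, _, List.Forall₂.cons h hs => by
      simp only [List.map_cons, h, map_eq_of_forall₂ hs]

theorem chain_mem_X {X : Finset α} {f g : α → β} {a : α} {l : List α}
    (h : List.Chain (Step X f g) a l) : ∀ x ∈ l, x ∈ X := by
  induction l generalizing a with
  | nil => intro x hx; simp at hx
  | cons b l ih =>
    intro x hx
    have hab := List.isChain_cons_cons.mp h
    rcases List.mem_cons.mp hx with rfl | hx
    · exact hab.1.2.1
    · exact ih hab.2 x hx

theorem exists_cycle_list {X : Finset α} {f g : α → β} {s t : α}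
    (h : Relation.TransGen (Step X f g) s t) :
    ∃ l : List α, List.Chain (Step X f g) s (l ++ [t]) := by
  induction h with
  | single h => exact ⟨[], chain_singleton'.2 h⟩
  | @tail b c _ hbc ih =>
    obtain ⟨l, hl⟩ := ih
    refine ⟨l ++ [b], ?_⟩
    have : l ++ [b] ++ [c] = l ++ b :: [c] := by simp
    rw [this, chain_split']
    exact ⟨hl, chain_singleton'.2 hbc⟩

theorem exists_nodup_cycle {X : Finset α} {f g : α → β} :
    ∀ (n : ℕ) {s : α} (l : List α), l.length ≤ n →
    List.Chain (Step X f g) s (l ++ [s]) →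
    ∃ l' : List α, List.Chain (Step X f g) s (l' ++ [s]) ∧ (s :: l').Nodup := by
  intro n
  induction n with
  | zero =>
    intro s l hl h
    have hnil : l = [] := List.eq_nil_of_length_eq_zero (Nat.le_zero.mp hl)
    subst hnil
    exact ⟨[], h, by simp⟩
  | succ n ih =>
    intro s l hl h
    by_cases hnd : (s :: l).Nodup
    · exact ⟨l, h, hnd⟩
    · obtain ⟨x, l1, l2, l3, hdec⟩ := exists_dup_decomp hnd
      cases l1 with
      | nil =>
        simp only [List.nil_append, List.cons.injEq] at hdec
        obtain ⟨rfl, rfl⟩ := hdec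
        have h' : List.Chain (Step X f g) s (l2 ++ s :: (l3 ++ [s])) := by
          simpa using h
        rw [chain_split'] at h'
        refine ih l3 ?_ h'.2
        have h5 := hl
        simp [List.length_append] at h5
        omega
      | cons a l1' =>
        simp only [List.cons_append, List.cons.injEq] at hdec
        obtain ⟨rfl, rfl⟩ := hdec
        have h' : List.Chain (Step X f g) s
            (l1' ++ x :: (l2 ++ x :: (l3 ++ [s]))) := by
          simpa using h
        rw [chain_split'] at h'
        obtain ⟨h1, h2⟩ := h'
        rw [chain_split'] at h2
        have hnew : List.Chain (Step X f g) s ((l1' ++ x :: l3) ++ [s]) := by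
          have : (l1' ++ x :: l3) ++ [s] = l1' ++ x :: (l3 ++ [s]) := by simp
          rw [this, chain_split']
          exact ⟨h1, h2.2⟩
        refine ih (l1' ++ x :: l3) ?_ hnew
        have h5 := hl
        simp [List.length_append] at h5 ⊢
        omega

end TsvAux

open TsvAux

/-- The team-semantical version of multiteam inclusion is characterized by covers
by balanced subsets. -/
theorem tsv_multiteam_inclusion_iff_cycle_cover
    {α β : Type*} [DecidableEq α] (X : Finset α) (f g : α → β) :
    (∃ m : α → ℕ, (∀ s ∈ X, 0 < m s) ∧
        Multiset.map f (∑ s ∈ X, Multiset.replicate (m s) s) ≤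
          Multiset.map g (∑ s ∈ X, Multiset.replicate (m s) s)) ↔
      ∃ L : List (Finset α),
        (∀ Y ∈ L, Y ⊆ X) ∧
        (∀ s ∈ X, ∃ Y ∈ L, s ∈ Y) ∧
        (∀ Y ∈ L, Multiset.map f Y.val ≤ Multiset.map g Y.val) := by
  classical
  constructor
  · rintro ⟨m, hm, hle⟩
    set W := ∑ s ∈ X, Multiset.replicate (m s) s with hWdef
    have hcard : Multiset.card (Multiset.map g W) ≤ Multiset.card (Multiset.map f W) := by
      simp
    have heq : Multiset.map f W = Multiset.map g W :=
      Multiset.eq_of_le_of_card_le hle hcard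
    -- counting lemma
    have hkey : ∀ (p : α → Prop) [DecidablePred p],
        Multiset.countP p W = ∑ t ∈ X.filter p, m t := by
      intro p _
      have : Multiset.countP p W
          = ∑ s ∈ X, Multiset.countP p (Multiset.replicate (m s) s) := by
        rw [hWdef]
        exact map_sum (Multiset.countPAddMonoidHom p) _ _
      rw [this, Finset.sum_filter]
      refine Finset.sum_congr rfl fun s _ => ?_
      induction m s with
      | zero => simp
      | succ n ihn =>
        rw [Multiset.replicate_succ, Multiset.countP_cons, ihn]
        split_ifs <;> simp
    have hcount : ∀ (B : Finset β),
        ∑ t ∈ X.filter (fun t => f t ∈ B), m t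
          = ∑ t ∈ X.filter (fun t => g t ∈ B), m t := by
      intro B
      have h1 := congrArg (Multiset.countP (· ∈ B)) heq
      rw [Multiset.countP_map, Multiset.countP_map,
        ← Multiset.countP_eq_card_filter, ← Multiset.countP_eq_card_filter] at h1
      rwa [hkey, hkey] at h1
    -- every point of X lies on a cycle
    have hcyc : ∀ s ∈ X, Relation.TransGen (Step X f g) s s := by
      intro s hs
      by_contra hns
      set R := X.filter (fun t => Relation.TransGen (Step X f g) s t) with hR
      have hsR : s ∉ R := by
        simp only [hR, Finset.mem_filter]
        tauto
      set B := (insert s R).image f with hB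
      have hBsub : insert s R ⊆ X :=
        Finset.insert_subset hs (Finset.filter_subset _ _)
      have h1 : ∑ t ∈ insert s R, m t ≤ ∑ t ∈ X.filter (fun t => f t ∈ B), m t := by
        apply Finset.sum_le_sum_of_subset
        intro t ht
        exact Finset.mem_filter.2 ⟨hBsub ht, Finset.mem_image_of_mem f ht⟩
      have h2 : X.filter (fun t => g t ∈ B) ⊆ R := by
        intro u hu
        simp only [Finset.mem_filter, hB, Finset.mem_image] at hu
        obtain ⟨huX, t, htmem, hft⟩ := hu
        have hstep : Step X f g t u := ⟨hBsub htmem, huX, hft⟩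
        rcases Finset.mem_insert.mp htmem with rfl | htR
        · exact Finset.mem_filter.2 ⟨huX, Relation.TransGen.single hstep⟩
        · exact Finset.mem_filter.2
            ⟨huX, Relation.TransGen.tail (Finset.mem_filter.mp htR).2 hstep⟩
      have h3 : ∑ t ∈ X.filter (fun t => g t ∈ B), m t ≤ ∑ t ∈ R, m t :=
        Finset.sum_le_sum_of_subset h2
      have h4 : ∑ t ∈ insert s R, m t ≤ ∑ t ∈ R, m t :=
        (h1.trans (le_of_eq (hcount B))).trans h3
      rw [Finset.sum_insert hsR] at h4
      have := hm s hs
      omega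
    -- extract a balanced subset containing each point
    have hY : ∀ s ∈ X, ∃ Y : Finset α, Y ⊆ X ∧ s ∈ Y ∧
        Multiset.map f Y.val = Multiset.map g Y.val := by
      intro s hs
      obtain ⟨l, hl⟩ := exists_cycle_list (hcyc s hs)
      obtain ⟨l', hl', hnd⟩ := exists_nodup_cycle l.length l le_rfl hl
      refine ⟨(s :: l').toFinset, ?_, by simp, ?_⟩
      · intro x hx
        rw [List.mem_toFinset] at hx
        rcases List.mem_cons.mp hx with rfl | hx
        · exact hs
        · exact chain_mem_X hl' x (by simp [hx])
      · have hval : ((s :: l').toFinset).val = ((s :: l' : List α) : Multiset α) := by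
          rw [List.toFinset_val]
          exact congrArg _ (List.dedup_eq_self.2 hnd)
        have hf₂ : List.Forall₂ (fun t u => f t = g u) (s :: l') (l' ++ [s]) :=
          (chain_append_singleton_iff_forall₂'.mp hl').imp
            (fun _ _ h => h.2.2)
        have hmapeq : (s :: l').map f = (l' ++ [s]).map g := map_eq_of_forall₂ hf₂
        have hperm : ((l' ++ [s]).map g).Perm ((s :: l').map g) :=
          (List.perm_append_singleton s l').map g
        rw [hval, Multiset.map_coe, Multiset.map_coe, hmapeq]
        exact Multiset.coe_eq_coe.2 hperm
    choose Y hY1 hY2 hY3 using hY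
    refine ⟨X.attach.toList.map (fun t => Y t.1 t.2), ?_, ?_, ?_⟩
    · intro Z hZ
      simp only [List.mem_map, Finset.mem_toList, Finset.mem_attach, true_and] at hZ
      obtain ⟨s, rfl⟩ := hZ
      exact hY1 s s.2
    · intro s hs
      refine ⟨Y s hs, ?_, hY2 s hs⟩
      apply List.mem_map.2
      exact ⟨⟨s, hs⟩, by simp, rfl⟩
    · intro Z hZ
      simp only [List.mem_map, Finset.mem_toList, Finset.mem_attach, true_and] at hZ
      obtain ⟨s, rfl⟩ := hZ
      exact le_of_eq (hY3 s s.2)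
  · rintro ⟨L, hsub, hcov, hbal⟩
    refine ⟨fun s => (L.filter (fun Y => s ∈ Y)).length, ?_, ?_⟩
    · intro s hs
      obtain ⟨Z, hZL, hsZ⟩ := hcov s hs
      exact List.length_pos_iff.2 (List.ne_nil_of_mem
        (List.mem_filter.2 ⟨hZL, by simpa using hsZ⟩))
    · have hcnt : ∀ (M : List (Finset α)) (a : α),
          Multiset.count a (M.map Finset.val).sum
            = (M.filter (fun Y => a ∈ Y)).length := by
        intro M a
        induction M with
        | nil => simp
        | cons Z M ih =>
          rw [List.map_cons, List.sum_cons, Multiset.count_add, ih,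
            List.filter_cons]
          by_cases hz : a ∈ Z
          · rw [if_pos (by simpa using hz), List.length_cons]
            have h1 : Multiset.count a Z.val = 1 :=
              Multiset.count_eq_one_of_mem Z.nodup (Finset.mem_def.1 hz)
            omega
          · rw [if_neg (by simpa using hz)]
            have h1 : Multiset.count a Z.val = 0 :=
              Multiset.count_eq_zero.2 (fun h => hz (Finset.mem_def.2 h))
            omega
      have hWeq : (∑ s ∈ X, Multiset.replicate
            ((L.filter (fun Y => s ∈ Y)).length) s)
          = (L.map Finset.val).sum := by
        ext a
        rw [Multiset.count_sum', hcnt]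
        simp only [Multiset.count_replicate]
        rw [Finset.sum_ite_eq' X a (fun x => (L.filter (fun Y => x ∈ Y)).length)]
        split_ifs with ha
        · rfl
        · symm
          rw [List.length_eq_zero_iff, List.filter_eq_nil_iff]
          intro Z hZ hmem
          exact ha (hsub Z hZ (by simpa using hmem))
      rw [hWeq]
      clear hWeq hcov hsub
      induction L with
      | nil => simp
      | cons Z M ih =>
        rw [List.map_cons, List.sum_cons, Multiset.map_add, Multiset.map_add]
        exact add_le_add (hbal Z (by simp))
          (ih (fun Y hY => hbal Y (List.mem_cons_of_mem _ hY)))
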